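/- Let Γ be a finite simple graph, let w be a word in the letters V(Γ) ∪ V(Γ)⁻¹ representing the element g ∈ G(Γ), and let v be a vertex such that v or v⁻¹ occurs as a letter of w but v ∉ supp(g). Then w contains a cancellation of v, and hence an innermost cancellation of v. Consequently, every non-reduced word in the letters V(Γ) ∪ V(Γ)⁻¹ contains an innermost cancellation of some vertex. -/

import Mathlib

/-! Right-angled Artin groups in the "opposite" convention:
generators are vertices, and two generators commute iff the vertices are NOT adjacent. -/

/-- The commutation relators for the right-angled Artin group (opposite convention):
one commutator for each pair of distinct non-adjacent vertices. -/
def raagRels {V : Type*} (Γ : SimpleGraph V) : Set (FreeGroup V) :=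
  {r | ∃ u v : V, u ≠ v ∧ ¬ Γ.Adj u v ∧
    r = FreeGroup.of u * FreeGroup.of v * (FreeGroup.of u)⁻¹ * (FreeGroup.of v)⁻¹}

/-- The right-angled Artin group `G(Γ)` (opposite convention). -/
abbrev Raag {V : Type*} (Γ : SimpleGraph V) : Type _ := PresentedGroup (raagRels Γ)

/-- The vertex generators of `G(Γ)`. -/
abbrev Raag.of {V : Type*} (Γ : SimpleGraph V) (v : V) : Raag Γ := PresentedGroup.of v

/-- The element of `G(Γ)` represented by a word: a list of letters, where the letter `(v, b)`
stands for `v` if `b = true` and for `v⁻¹` if `b = false`. -/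
def wordProd {V : Type*} (Γ : SimpleGraph V) (w : List (V × Bool)) : Raag Γ :=
  (w.map fun l => if l.2 then Raag.of Γ l.1 else (Raag.of Γ l.1)⁻¹).prod

/-- A word is reduced if no shorter word represents the same element of `G(Γ)`. -/
def IsReducedWord {V : Type*} (Γ : SimpleGraph V) (w : List (V × Bool)) : Prop :=
  ∀ w' : List (V × Bool), wordProd Γ w' = wordProd Γ w → w.length ≤ w'.length

/-- The word length of `g` with respect to a generating set `S` of a group:
the least length of a list of elements of `S ∪ S⁻¹` whose product is `g`. -/
noncomputable def wordLength {G : Type*} [Group G] (S : Set G) (g : G) : ℕ :=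
  sInf {n | ∃ l : List G, (∀ x ∈ l, x ∈ S ∨ x⁻¹ ∈ S) ∧ l.prod = g ∧ l.length = n}

/-- The (right-invariant) word metric associated to a generating set. -/
noncomputable def wordDist {G : Type*} [Group G] (S : Set G) (x y : G) : ℝ :=
  (wordLength S (y * x⁻¹) : ℝ)

/-- Word length in `G(Γ)` with respect to the vertex generating set. -/
noncomputable def raagNorm {V : Type*} (Γ : SimpleGraph V) (g : Raag Γ) : ℕ :=
  wordLength (Set.range (Raag.of Γ)) g

/-- The word metric on `G(Γ)` with respect to the vertex generating set. -/
noncomputable def raagDist {V : Type*} (Γ : SimpleGraph V) (x y : Raag Γ) : ℝ :=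
  wordDist (Set.range (Raag.of Γ)) x y

/-- A quasi-isometric group embedding: an injective group homomorphism which
is a quasi-isometric embedding with respect to the given metrics. -/
def IsQIEmbedding {G H : Type*} [Group G] [Group H] (f : G →* H)
    (dG : G → G → ℝ) (dH : H → H → ℝ) : Prop :=
  Function.Injective f ∧ ∃ C : ℝ, 1 ≤ C ∧ ∀ x y : G,
    dG x y / C - C ≤ dH (f x) (f y) ∧ dH (f x) (f y) ≤ C * dG x y + C

/-- The support of `g ∈ G(Γ)`: vertices occurring in some reduced word representing `g`. -/
def raagSupp {V : Type*} (Γ : SimpleGraph V) (g : Raag Γ) : Set V :=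
  {v | ∃ w : List (V × Bool), IsReducedWord Γ w ∧ wordProd Γ w = g ∧ ∃ b, (v, b) ∈ w}

/-- A cancellation of the vertex `v` in the word `w`: a subword `v^{±1} w' v^{∓1}` where the
support of the element represented by `w'` is disjoint from the link of `v`. -/
def HasCancellationOf {V : Type*} (Γ : SimpleGraph V) (w : List (V × Bool)) (v : V) : Prop :=
  ∃ (w₁ w' w₂ : List (V × Bool)) (b : Bool),
    w = w₁ ++ (v, b) :: (w' ++ (v, !b) :: w₂) ∧
    ∀ u ∈ raagSupp Γ (wordProd Γ w'), ¬ Γ.Adj v u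

/-- An innermost cancellation of the vertex `v` in the word `w`: a cancellation
`v^{±1} w' v^{∓1}` in which moreover no letter of `w'` involves `v`. -/
def HasInnermostCancellationOf {V : Type*} (Γ : SimpleGraph V) (w : List (V × Bool)) (v : V) :
    Prop :=
  ∃ (w₁ w' w₂ : List (V × Bool)) (b : Bool),
    w = w₁ ++ (v, b) :: (w' ++ (v, !b) :: w₂) ∧
    (∀ u ∈ raagSupp Γ (wordProd Γ w'), ¬ Γ.Adj v u) ∧
    ∀ b' : Bool, (v, b') ∉ w'

/-- A covering of simple graphs: a graph homomorphism which is bijective on neighbor sets. -/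
structure IsGraphCovering {V' V : Type*} (Γ' : SimpleGraph V') (Γ : SimpleGraph V)
    (p : V' → V) : Prop where
  adj : ∀ {x y : V'}, Γ'.Adj x y → Γ.Adj (p x) (p y)
  bijOn : ∀ x : V', Set.BijOn p (Γ'.neighborSet x) (Γ.neighborSet (p x))

/-- A universal cover of a connected graph `Γ`: a covering whose total graph is a tree. -/
def IsUniversalCover {V' V : Type*} (Γ' : SimpleGraph V') (Γ : SimpleGraph V)
    (p : V' → V) : Prop :=
  IsGraphCovering Γ' Γ p ∧ Γ'.IsTree

section Phi

variable {V' V : Type*} [LinearOrder V'] [DecidableEq V]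

/-- The lifts in `T` of a vertex `v`, listed in increasing order. -/
def liftVerts (p : V' → V) (T : Finset V') (v : V) : List V' :=
  (T.filter fun t => p t = v).sort (· ≤ ·)

/-- The lifts in `T` of a vertex `v`, in increasing order, as vertices of the induced subgraph. -/
def liftSubVerts (p : V' → V) (T : Finset V') (v : V) : List (↥(T : Set V')) :=
  (liftVerts p T v).pmap (fun t ht => (⟨t, ht⟩ : ↥(T : Set V')))
    (fun t ht => by
      have : t ∈ T := (Finset.mem_filter.mp ((Finset.mem_sort _).mp ht)).1
      exact Finset.mem_coe.mpr this)

/-- `φ(Γ,T)` sends each vertex `v` of `Γ` to the product, in increasing order,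
of the lifts of `v` lying in `T`.  This predicate singles out the homomorphism `φ(Γ,T)`. -/
def IsPhi (Γ : SimpleGraph V) (Γ' : SimpleGraph V') (p : V' → V) (T : Finset V')
    (φ : Raag Γ →* Raag (Γ'.induce (T : Set V'))) : Prop :=
  ∀ v : V, φ (Raag.of Γ v) =
    ((liftSubVerts p T v).map (Raag.of (Γ'.induce (T : Set V')))).prod

/-- The `φ(Γ,T)`-homomorphic word of a word `w`: each letter `x^{e}` of `w` is replaced by the
word `(t₁ t₂ ⋯ t_k)^{e}` where `t₁ < t₂ < ⋯ < t_k` are the lifts of `x` lying in `T`. -/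
def homWord (p : V' → V) (T : Finset V') (w : List (V × Bool)) :
    List (↥(T : Set V') × Bool) :=
  w.flatMap fun l =>
    if l.2 then (liftSubVerts p T l.1).map (fun t => (t, true))
    else ((liftSubVerts p T l.1).reverse).map (fun t => (t, false))

/-- `φ(Γ,T)` is `F`-surviving: for every reduced word `w` in `G(Γ)` and every `v ∈ F`, the
`φ(Γ,T)`-homomorphic word of `w` has no cancellation of `v`. -/
def IsSurviving (Γ : SimpleGraph V) (Γ' : SimpleGraph V') (p : V' → V) (T : Finset V')
    (F : Set V') : Prop :=
  ∀ w : List (V × Bool), IsReducedWord Γ w →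
    ∀ (v : V') (hv : v ∈ (T : Set V')), v ∈ F →
      ¬ HasCancellationOf (Γ'.induce (T : Set V')) (homWord p T w) ⟨v, hv⟩

end Phi


namespace RaagCancel

open List

/-! ### Generic list decomposition helpers -/

theorem one_decomp {α : Type*} {c d : α} :
    ∀ {x p s y : List α}, p ++ c :: s = x ++ d :: y →
    (∃ t, x = p ++ c :: t ∧ s = t ++ d :: y) ∨ (p = x ∧ c = d ∧ s = y) ∨
      (∃ t, p = x ++ d :: t ∧ y = t ++ c :: s) := by
  intro x
  induction x with
  | nil =>
    intro p s y h
    cases p with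
    | nil => simp_all
    | cons e p' =>
      simp only [cons_append, nil_append, cons.injEq] at h
      exact Or.inr (Or.inr ⟨p', by simp [h.1], h.2.symm⟩)
  | cons g x' ih =>
    intro p s y h
    cases p with
    | nil =>
      simp only [nil_append, cons_append, cons.injEq] at h
      exact Or.inl ⟨x', by simp [h.1], h.2⟩
    | cons e p' =>
      simp only [cons_append, cons.injEq] at h
      rcases ih h.2 with ⟨t, h1, h2⟩ | ⟨h1, h2, h3⟩ | ⟨t, h1, h2⟩
      · exact Or.inl ⟨t, by simp [h.1, h1], h2⟩
      · exact Or.inr (Or.inl ⟨by simp [h.1, h1], h2, h3⟩)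
      · exact Or.inr (Or.inr ⟨t, by simp [h.1, h1], h2⟩)

theorem two_decomp {α : Type*} {c a b : α} :
    ∀ {x p s y : List α}, p ++ c :: s = x ++ a :: b :: y →
    (∃ t, x = p ++ c :: t ∧ s = t ++ a :: b :: y) ∨ (p = x ∧ c = a ∧ s = b :: y) ∨
      (p = x ++ [a] ∧ c = b ∧ s = y) ∨ (∃ t, p = x ++ a :: b :: t ∧ y = t ++ c :: s) := by
  intro x
  induction x with
  | nil =>
    intro p s y h
    cases p with
    | nil => simp_all
    | cons e p' =>
      simp only [cons_append, nil_append, cons.injEq] at h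
      cases p' with
      | nil =>
        simp only [nil_append, cons.injEq] at h
        exact Or.inr (Or.inr (Or.inl ⟨by simp [h.1], h.2.1, h.2.2⟩))
      | cons f p'' =>
        simp only [cons_append, cons.injEq] at h
        exact Or.inr (Or.inr (Or.inr ⟨p'', by simp [h.1, h.2.1], h.2.2.symm⟩))
  | cons g x' ih =>
    intro p s y h
    cases p with
    | nil =>
      simp only [nil_append, cons_append, cons.injEq] at h
      exact Or.inl ⟨x', by simp [h.1], h.2⟩
    | cons e p' =>
      simp only [cons_append, cons.injEq] at h
      rcases ih h.2 with ⟨t, h1, h2⟩ | ⟨h1, h2, h3⟩ | ⟨h1, h2, h3⟩ | ⟨t, h1, h2⟩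
      · exact Or.inl ⟨t, by simp [h.1, h1], h2⟩
      · exact Or.inr (Or.inl ⟨by simp [h.1, h1], h2, h3⟩)
      · exact Or.inr (Or.inr (Or.inl ⟨by simp [h.1, h1], h2, h3⟩))
      · exact Or.inr (Or.inr (Or.inr ⟨t, by simp [h.1, h1], h2⟩))

end RaagCancel

namespace RaagCancel

open List

open scoped Classical

variable {V : Type} (Γ : SimpleGraph V)

/-- The group element of a single letter. -/
noncomputable def lelem (l : V × Bool) : Raag Γ :=
  if l.2 then Raag.of Γ l.1 else (Raag.of Γ l.1)⁻¹

theorem wordProd_eq (w : List (V × Bool)) : wordProd Γ w = (w.map (lelem Γ)).prod := rfl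

theorem wp_nil : wordProd Γ ([] : List (V × Bool)) = 1 := rfl

theorem wp_cons (l : V × Bool) (w : List (V × Bool)) :
    wordProd Γ (l :: w) = lelem Γ l * wordProd Γ w := by
  simp [wordProd_eq]

theorem wp_append (x y : List (V × Bool)) :
    wordProd Γ (x ++ y) = wordProd Γ x * wordProd Γ y := by
  simp [wordProd_eq]

theorem lelem_not (v : V) (ε : Bool) : lelem Γ (v, !ε) = (lelem Γ (v, ε))⁻¹ := by
  cases ε <;> simp [lelem]

theorem of_comm {u v : V} (h : ¬ Γ.Adj u v) :
    Commute (Raag.of Γ u) (Raag.of Γ v) := by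
  rcases eq_or_ne u v with rfl | hne
  · exact Commute.refl _
  · have hr : (FreeGroup.of u * FreeGroup.of v * (FreeGroup.of u)⁻¹ * (FreeGroup.of v)⁻¹)
        ∈ raagRels Γ := ⟨u, v, hne, h, rfl⟩
    have h1 : (PresentedGroup.mk (raagRels Γ)
        (FreeGroup.of u * FreeGroup.of v * (FreeGroup.of u)⁻¹ * (FreeGroup.of v)⁻¹)) = 1 := by
      apply (QuotientGroup.eq_one_iff _).2
      exact Subgroup.subset_normalClosure hr
    rw [map_mul, map_mul, map_inv, map_inv] at h1
    have h2 : Raag.of Γ u * Raag.of Γ v * (Raag.of Γ u)⁻¹ * (Raag.of Γ v)⁻¹ = 1 := h1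
    have h3 : (open scoped commutatorElement in ⁅Raag.of Γ u, Raag.of Γ v⁆) = 1 := h2
    exact commutatorElement_eq_one_iff_commute.mp h3

theorem lelem_comm {l l' : V × Bool} (h : ¬ Γ.Adj l.1 l'.1) :
    Commute (lelem Γ l) (lelem Γ l') := by
  have h0 : Commute (Raag.of Γ l.1) (Raag.of Γ l'.1) := of_comm Γ h
  rcases l with ⟨u, a⟩; rcases l' with ⟨v, b⟩
  cases a <;> cases b <;> simp [lelem] <;>
    first
      | exact h0
      | exact h0.inv_left
      | exact h0.inv_right
      | exact (h0.inv_left).inv_right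

/-- All letters of `m` commute with `v`. -/
def CommV (v : V) (m : List (V × Bool)) : Prop := ∀ l ∈ m, ¬ Γ.Adj v l.1

theorem commV_wordProd {v : V} {ε : Bool} {m : List (V × Bool)} (h : CommV Γ v m) :
    Commute (lelem Γ (v, ε)) (wordProd Γ m) := by
  induction m with
  | nil => rw [wp_nil]; exact Commute.one_right _
  | cons l t ih =>
    rw [wp_cons]
    exact Commute.mul_right (lelem_comm Γ (h l (mem_cons_self)))
      (ih fun l' hl' => h l' (mem_cons_of_mem _ hl'))

/-- One shuffle: swap two adjacent letters whose vertices are non-adjacent in `Γ`. -/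
def WStep (w w' : List (V × Bool)) : Prop :=
  ∃ (x y : List (V × Bool)) (a b : V × Bool),
    ¬ Γ.Adj a.1 b.1 ∧ w = x ++ a :: b :: y ∧ w' = x ++ b :: a :: y

theorem WStep.symm' {w w' : List (V × Bool)} (h : WStep Γ w w') : WStep Γ w' w := by
  obtain ⟨x, y, a, b, hab, h1, h2⟩ := h
  exact ⟨x, y, b, a, fun hadj => hab hadj.symm, h2, h1⟩

theorem WStep.length_eq {w w' : List (V × Bool)} (h : WStep Γ w w') : w.length = w'.length := by
  obtain ⟨x, y, a, b, _, h1, h2⟩ := h; subst h1; subst h2; simp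

theorem WStep.countP_eq {w w' : List (V × Bool)} (h : WStep Γ w w') (p : (V × Bool) → Bool) :
    w.countP p = w'.countP p := by
  obtain ⟨x, y, a, b, _, h1, h2⟩ := h; subst h1; subst h2
  simp [countP_append, countP_cons]; omega

theorem WStep.wordProd_eq {w w' : List (V × Bool)} (h : WStep Γ w w') :
    wordProd Γ w = wordProd Γ w' := by
  obtain ⟨x, y, a, b, hab, h1, h2⟩ := h; subst h1; subst h2
  simp only [wp_append, wp_cons, ← mul_assoc]
  rw [mul_assoc (wordProd Γ x), (lelem_comm Γ hab).eq, ← mul_assoc]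

/-- The set of shuffle classes of words. -/
def QL := Quot (WStep Γ)

/-- Class of a word. -/
def mkQ (w : List (V × Bool)) : QL Γ := Quot.mk _ w

noncomputable def lenQ : QL Γ → ℕ :=
  Quot.lift List.length fun _ _ h => WStep.length_eq Γ h

noncomputable def wpQ : QL Γ → Raag Γ :=
  Quot.lift (wordProd Γ) fun _ _ h => WStep.wordProd_eq Γ h

noncomputable def cntQ (v : V) : QL Γ → ℕ :=
  Quot.lift (List.countP (fun l => decide (l.1 = v)))
    fun _ _ h => WStep.countP_eq Γ h _

@[simp] theorem lenQ_mk (w : List (V × Bool)) : lenQ Γ (mkQ Γ w) = w.length := rfl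
@[simp] theorem wpQ_mk (w : List (V × Bool)) : wpQ Γ (mkQ Γ w) = wordProd Γ w := rfl
@[simp] theorem cntQ_mk (v : V) (w : List (V × Bool)) :
    cntQ Γ v (mkQ Γ w) = w.countP (fun l => decide (l.1 = v)) := rfl

end RaagCancel

namespace RaagCancel

open List

open scoped Classical

variable {V : Type} (Γ : SimpleGraph V)

/-- The letter `(v,β)` can be shuffled to the front of `w`. -/
def Reach (v : V) (β : Bool) (w : List (V × Bool)) : Prop :=
  ∃ m y, w = m ++ (v, β) :: y ∧ CommV Γ v m

/-- A word admitting a cancellation pattern. -/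
def Red (w : List (V × Bool)) : Prop :=
  ∃ (x z : List (V × Bool)) (u : V) (c : Bool), w = x ++ (u, c) :: z ∧ Reach Γ u (!c) z

def Irr (w : List (V × Bool)) : Prop := ¬ Red Γ w

theorem reach_cons {v : V} {β : Bool} {l : V × Bool} {w : List (V × Bool)} :
    Reach Γ v β (l :: w) ↔ l = (v, β) ∨ (¬ Γ.Adj v l.1 ∧ Reach Γ v β w) := by
  constructor
  · rintro ⟨m, y, hm, hc⟩
    cases m with
    | nil => simp only [nil_append, cons.injEq] at hm; exact Or.inl hm.1
    | cons e m' =>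
      simp only [cons_append, cons.injEq] at hm
      exact Or.inr ⟨hm.1 ▸ hc e (mem_cons_self),
        ⟨m', y, hm.2, fun l' hl' => hc l' (mem_cons_of_mem _ hl')⟩⟩
  · rintro (rfl | ⟨hl, m, y, rfl, hc⟩)
    · exact ⟨[], w, rfl, by simp [CommV]⟩
    · exact ⟨l :: m, y, rfl, by
        intro l' hl'
        rcases mem_cons.1 hl' with rfl | h'
        · exact hl
        · exact hc l' h'⟩

theorem reach_step {v : V} {β : Bool} {w w' : List (V × Bool)}
    (hs : WStep Γ w w') (h : Reach Γ v β w) : Reach Γ v β w' := by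
  obtain ⟨x, y, a, b, hab, rfl, rfl⟩ := hs
  obtain ⟨m, y₀, hm, hc⟩ := h
  rcases two_decomp hm.symm with ⟨t, h1, h2⟩ | ⟨h1, h2, h3⟩ | ⟨h1, h2, h3⟩ | ⟨t, h1, h2⟩
  · -- swap inside the tail y₀
    refine ⟨m, t ++ b :: a :: y, ?_, hc⟩
    rw [h1]; simp
  · -- the reachable letter is `a`
    subst h1; subst h2; subst h3
    refine ⟨m ++ [b], y, by simp, ?_⟩
    intro l hl
    rcases mem_append.1 hl with h' | h'
    · exact hc l h'
    · simp only [mem_singleton] at h'; subst h'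
      exact hab
  · -- the reachable letter is `b`
    subst h1; subst h2; subst h3
    exact ⟨x, a :: y₀, by simp, fun l hl => hc l (by simp [hl])⟩
  · -- swap inside the prefix m
    subst h1
    refine ⟨x ++ b :: a :: t, y₀, by simp [h2], ?_⟩
    intro l hl
    apply hc
    simp only [mem_append, mem_cons] at hl ⊢
    tauto

theorem reach_iff_step {v : V} {β : Bool} {w w' : List (V × Bool)} (hs : WStep Γ w w') :
    Reach Γ v β w ↔ Reach Γ v β w' :=
  ⟨reach_step Γ hs, reach_step Γ (WStep.symm' Γ hs)⟩

theorem red_step {w w' : List (V × Bool)} (hs : WStep Γ w w') (h : Red Γ w) : Red Γ w' := by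
  obtain ⟨x₀, y₀, a, b, hab, rfl, rfl⟩ := hs
  obtain ⟨x, z, u, c, hm, hr⟩ := h
  rcases two_decomp hm.symm with ⟨t, h1, h2⟩ | ⟨h1, h2, h3⟩ | ⟨h1, h2, h3⟩ | ⟨t, h1, h2⟩
  · -- swap inside z
    refine ⟨x, t ++ b :: a :: y₀, u, c, by rw [h1]; simp, ?_⟩
    exact reach_step Γ ⟨t, y₀, a, b, hab, h2, rfl⟩ hr
  · -- (u,c) = a
    subst h1; subst h2; subst h3
    rcases (reach_cons Γ).1 hr with rfl | ⟨hbu, hr'⟩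
    · exact ⟨x, (u, c) :: y₀, u, !c, by simp, by
        rw [Bool.not_not]
        exact (reach_cons Γ).2 (Or.inl rfl)⟩
    · exact ⟨x ++ [b], y₀, u, c, by simp, hr'⟩
  · -- (u,c) = b
    subst h1; subst h2; subst h3
    refine ⟨x₀, a :: z, u, c, by simp, ?_⟩
    exact (reach_cons Γ).2 (Or.inr ⟨fun hadj => hab hadj.symm, hr⟩)
  · -- swap inside x
    subst h1
    exact ⟨x₀ ++ b :: a :: t, z, u, c, by simp [h2], hr⟩

theorem irr_step_iff {w w' : List (V × Bool)} (hs : WStep Γ w w') : Irr Γ w ↔ Irr Γ w' :=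
  not_congr ⟨red_step Γ hs, red_step Γ (WStep.symm' Γ hs)⟩

/-- Delete the first occurrence of a letter. -/
noncomputable def delF (c : V × Bool) : List (V × Bool) → List (V × Bool)
  | [] => []
  | l :: t => if l = c then t else l :: delF c t

theorem delF_cons (c l : V × Bool) (t : List (V × Bool)) :
    delF c (l :: t) = if l = c then t else l :: delF c t := rfl

theorem exists_firstocc {c : V × Bool} {w : List (V × Bool)} (h : c ∈ w) :
    ∃ p s, w = p ++ c :: s ∧ c ∉ p ∧ delF c w = p ++ s := by
  induction w with
  | nil => simp at h
  | cons l t ih =>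
    by_cases hl : l = c
    · subst hl
      exact ⟨[], t, rfl, by simp, by simp [delF_cons]⟩
    · rcases mem_cons.1 h with h' | h'
      · exact absurd h'.symm hl
      · obtain ⟨p, s, h1, h2, h3⟩ := ih h'
        refine ⟨l :: p, s, by simp [h1], ?_, by simp [delF_cons, hl, h3]⟩
        intro hm
        rcases mem_cons.1 hm with h'' | h''
        · exact hl h''.symm
        · exact h2 h''

theorem delF_append_not_mem {c : V × Bool} {x : List (V × Bool)} (h : c ∉ x)
    (z : List (V × Bool)) : delF c (x ++ z) = x ++ delF c z := by
  induction x with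
  | nil => simp
  | cons l t ih =>
    have hl : l ≠ c := fun h' => h (h' ▸ mem_cons_self)
    simp only [cons_append, delF_cons, if_neg hl]
    rw [ih fun h' => h (mem_cons_of_mem _ h')]

theorem delF_step {w w' : List (V × Bool)} (hs : WStep Γ w w') (c : V × Bool) :
    mkQ Γ (delF c w) = mkQ Γ (delF c w') := by
  obtain ⟨x, y, a, b, hab, rfl, rfl⟩ := hs
  by_cases hx : c ∈ x
  · obtain ⟨p, s, h1, h2, h3⟩ := exists_firstocc hx
    rw [h1]
    have e1 : delF c ((p ++ c :: s) ++ a :: b :: y) = p ++ (s ++ a :: b :: y) := by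
      rw [append_assoc, delF_append_not_mem h2]
      simp [delF_cons]
    have e2 : delF c ((p ++ c :: s) ++ b :: a :: y) = p ++ (s ++ b :: a :: y) := by
      rw [append_assoc, delF_append_not_mem h2]
      simp [delF_cons]
    rw [e1, e2]
    apply Quot.sound
    exact ⟨p ++ s, y, a, b, hab, by simp, by simp⟩
  · rw [delF_append_not_mem hx, delF_append_not_mem hx]
    by_cases ha : a = c <;> by_cases hb : b = c
    · subst ha; subst hb; simp [delF_cons]
    · subst ha
      simp [delF_cons, hb]
    · subst hb
      simp [delF_cons, ha]
    · simp only [delF_cons, if_neg ha, if_neg hb]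
      apply Quot.sound
      exact ⟨x, delF c y, a, b, hab, by simp, by simp⟩

theorem reach_first {v : V} {β : Bool} {w : List (V × Bool)} (h : Reach Γ v β w) :
    ∃ m y, w = m ++ (v, β) :: y ∧ CommV Γ v m ∧ (v, β) ∉ m ∧ delF (v, β) w = m ++ y := by
  obtain ⟨m₀, y₀, hm, hc⟩ := h
  have hmem : (v, β) ∈ w := hm ▸ (by simp)
  obtain ⟨p, s, h1, h2, h3⟩ := exists_firstocc hmem
  refine ⟨p, s, h1, ?_, h2, h3⟩
  rw [h1] at hm
  rcases one_decomp hm with ⟨t, ht1, ht2⟩ | ⟨he1, _, _⟩ | ⟨t, ht1, _⟩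
  · -- m₀ extends p
    intro l hl
    exact hc l (ht1 ▸ mem_append.2 (Or.inl hl))
  · exact he1 ▸ hc
  · exact absurd (ht1 ▸ mem_append.2 (Or.inr (mem_cons_self))) h2

theorem bool_ne_not {b b' : Bool} (h : b' ≠ b) : b' = !b := by
  cases b <;> cases b' <;> simp_all

theorem reach_first_irr {v : V} {β : Bool} {w : List (V × Bool)} (h : Reach Γ v β w)
    (hI : Irr Γ w) :
    ∃ m y, w = m ++ (v, β) :: y ∧ CommV Γ v m ∧ (∀ b', (v, b') ∉ m) ∧
      delF (v, β) w = m ++ y := by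
  obtain ⟨m, y, h1, h2, h3, h4⟩ := reach_first Γ h
  refine ⟨m, y, h1, h2, ?_, h4⟩
  intro b' hb'
  have hbne : b' ≠ β := fun he => h3 (he ▸ hb')
  have hb'eq : b' = !β := bool_ne_not hbne
  subst hb'eq
  obtain ⟨m₁, m₂, rfl⟩ := append_of_mem hb'
  apply hI
  refine ⟨m₁, m₂ ++ (v, β) :: y, v, !β, by simp [h1], ?_⟩
  rw [Bool.not_not]
  exact ⟨m₂, y, rfl, fun l hl => h2 l (by simp [hl])⟩

end RaagCancel

namespace RaagCancel

open List

open scoped Classical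

variable {V : Type} (Γ : SimpleGraph V)

theorem WStep.cons {w w' : List (V × Bool)} (l : V × Bool) (hs : WStep Γ w w') :
    WStep Γ (l :: w) (l :: w') := by
  obtain ⟨x, y, a, b, hab, rfl, rfl⟩ := hs
  exact ⟨l :: x, y, a, b, hab, rfl, rfl⟩

noncomputable def actQ (v : V) (ε : Bool) : QL Γ → QL Γ :=
  Quot.lift
    (fun w => if Reach Γ v (!ε) w then mkQ Γ (delF (v, !ε) w) else mkQ Γ ((v, ε) :: w))
    (by
      intro w w' hs
      by_cases h : Reach Γ v (!ε) w
      · rw [if_pos h, if_pos ((reach_iff_step Γ hs).1 h)]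
        exact delF_step Γ hs _
      · rw [if_neg h, if_neg fun h' => h ((reach_iff_step Γ hs).2 h')]
        exact Quot.sound (WStep.cons Γ _ hs))

theorem actQ_del {v : V} {ε : Bool} {w : List (V × Bool)} (h : Reach Γ v (!ε) w) :
    actQ Γ v ε (mkQ Γ w) = mkQ Γ (delF (v, !ε) w) := by
  simp only [actQ, mkQ]
  exact if_pos h

theorem actQ_ins {v : V} {ε : Bool} {w : List (V × Bool)} (h : ¬ Reach Γ v (!ε) w) :
    actQ Γ v ε (mkQ Γ w) = mkQ Γ ((v, ε) :: w) := by
  simp only [actQ, mkQ]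
  exact if_neg h

/-- Bubble a reachable letter to the front within the shuffle class. -/
theorem bubble {v : V} {β : Bool} {y : List (V × Bool)} :
    ∀ {m : List (V × Bool)}, CommV Γ v m →
      mkQ Γ (m ++ (v, β) :: y) = mkQ Γ ((v, β) :: (m ++ y)) := by
  intro m
  induction m with
  | nil => simp
  | cons l t ih =>
    intro hc
    have h1 : mkQ Γ (l :: (t ++ (v, β) :: y)) = mkQ Γ (l :: ((v, β) :: (t ++ y))) := by
      have e := ih fun l' hl' => hc l' (mem_cons_of_mem _ hl')
      calc mkQ Γ (l :: (t ++ (v, β) :: y))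
          = Quot.lift (fun z => mkQ Γ (l :: z))
              (fun _ _ hs => Quot.sound (WStep.cons Γ l hs)) (mkQ Γ (t ++ (v, β) :: y)) := rfl
        _ = Quot.lift (fun z => mkQ Γ (l :: z))
              (fun _ _ hs => Quot.sound (WStep.cons Γ l hs)) (mkQ Γ ((v, β) :: (t ++ y))) := by
              rw [e]
        _ = mkQ Γ (l :: ((v, β) :: (t ++ y))) := rfl
    have h2 : mkQ Γ (l :: (v, β) :: (t ++ y)) = mkQ Γ ((v, β) :: l :: (t ++ y)) :=
      Quot.sound ⟨[], t ++ y, l, (v, β), fun hadj => (hc l (mem_cons_self)) hadj.symm,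
        rfl, rfl⟩
    simpa using h1.trans h2

def IrrQ : QL Γ → Prop :=
  Quot.lift (Irr Γ) fun _ _ hs => propext (irr_step_iff Γ hs)

@[simp] theorem irrQ_mk (w : List (V × Bool)) : IrrQ Γ (mkQ Γ w) = Irr Γ w := rfl

theorem irr_nil : Irr Γ ([] : List (V × Bool)) := by
  rintro ⟨x, z, u, c, h, -⟩
  simp at h

theorem irr_ins {v : V} {ε : Bool} {w : List (V × Bool)} (hI : Irr Γ w)
    (hR : ¬ Reach Γ v (!ε) w) : Irr Γ ((v, ε) :: w) := by
  rintro ⟨x, z, u, c, hm, hr⟩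
  cases x with
  | nil =>
    simp only [nil_append, cons.injEq] at hm
    obtain ⟨h1, h2⟩ := hm
    rw [Prod.mk.injEq] at h1
    obtain ⟨rfl, rfl⟩ := h1
    subst h2
    exact hR hr
  | cons e x' =>
    simp only [cons_append, cons.injEq] at hm
    exact hI ⟨x', z, u, c, hm.2, hr⟩

theorem irr_del {v : V} {β : Bool} {m y : List (V × Bool)}
    (hI : Irr Γ (m ++ (v, β) :: y)) (hc : CommV Γ v m) : Irr Γ (m ++ y) := by
  rintro ⟨x, z, u, c, hm, hr⟩
  obtain ⟨n, z', hz, hcn⟩ := hr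
  rcases List.append_eq_append_iff.1 hm with ⟨t, h1, h2⟩ | ⟨t, h1, h2⟩
  · -- x = m ++ t : the pattern is entirely inside y
    subst h1; subst h2
    exact hI ⟨m ++ (v, β) :: t, z, u, c, by simp, n, z', hz, hcn⟩
  · -- m = x ++ t
    subst h1
    cases t with
    | nil =>
      simp only [nil_append] at h2
      exact hI ⟨x ++ [(v, β)], z, u, c, by rw [← h2]; simp, n, z', hz, hcn⟩
    | cons e t' =>
      simp only [cons_append, cons.injEq] at h2
      obtain ⟨rfl, h2⟩ := h2
      subst hz
      have hadjuv : ¬ Γ.Adj u v := by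
        have := hc (u, c) (by simp)
        exact fun h' => this h'.symm
      rcases List.append_eq_append_iff.1 h2.symm with ⟨s, hs1, hs2⟩ | ⟨s, hs1, hs2⟩
      · -- n = t' ++ s, y = s ++ (u,!c) :: z' : spanning pattern
        subst hs1; subst hs2
        apply hI
        refine ⟨x, t' ++ (v, β) :: (s ++ (u, !c) :: z'), u, c, by simp, ?_⟩
        refine ⟨t' ++ (v, β) :: s, z', by simp, ?_⟩
        intro l hl
        simp only [mem_append, mem_cons] at hl
        rcases hl with hl | rfl | hl
        · exact hcn l (by simp [hl])
        · exact hadjuv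
        · exact hcn l (by simp [hl])
      · -- t' = n ++ s
        subst hs1
        cases s with
        | nil =>
          simp only [nil_append] at hs2
          apply hI
          refine ⟨x, n ++ (v, β) :: y, u, c, by simp, ?_⟩
          refine ⟨n ++ [(v, β)], z', by rw [← hs2]; simp, ?_⟩
          intro l hl
          simp only [mem_append, mem_singleton] at hl
          rcases hl with hl | rfl
          · exact hcn l (by simp [hl])
          · exact hadjuv
        | cons f s' =>
          simp only [cons_append, cons.injEq] at hs2
          obtain ⟨rfl, hs2⟩ := hs2
          apply hI
          refine ⟨x, n ++ (u, !c) :: (s' ++ (v, β) :: y), u, c, by simp, ?_⟩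
          exact ⟨n, s' ++ (v, β) :: y, rfl, fun l hl => hcn l (by simp [hl])⟩

end RaagCancel

namespace RaagCancel

open List

open scoped Classical

variable {V : Type} (Γ : SimpleGraph V)

theorem not_reach_nil {v : V} {β : Bool} : ¬ Reach Γ v β ([] : List (V × Bool)) := by
  rintro ⟨m, y, h, -⟩
  simp at h

theorem reach_delF_of_ne {u : V} {β : Bool} {c : V × Bool} (hne : c ≠ (u, β)) :
    ∀ {w : List (V × Bool)}, Reach Γ u β w → Reach Γ u β (delF c w) := by
  intro w
  induction w with
  | nil => intro h; exact absurd h (not_reach_nil Γ)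
  | cons l t ih =>
    intro h
    rcases (reach_cons Γ).1 h with rfl | ⟨hl, hr⟩
    · rw [delF_cons, if_neg (Ne.symm hne)]
      exact (reach_cons Γ).2 (Or.inl rfl)
    · rw [delF_cons]
      by_cases hc : l = c
      · rw [if_pos hc]; exact hr
      · rw [if_neg hc]
        exact (reach_cons Γ).2 (Or.inr ⟨hl, ih hr⟩)

theorem reach_of_delF {u : V} {β : Bool} {c : V × Bool} (hcu : ¬ Γ.Adj u c.1) :
    ∀ {w : List (V × Bool)}, Reach Γ u β (delF c w) → Reach Γ u β w := by
  intro w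
  induction w with
  | nil => intro h; exact absurd h (not_reach_nil Γ)
  | cons l t ih =>
    intro h
    rw [delF_cons] at h
    by_cases hc : l = c
    · rw [if_pos hc] at h
      exact (reach_cons Γ).2 (Or.inr ⟨hc ▸ hcu, h⟩)
    · rw [if_neg hc] at h
      rcases (reach_cons Γ).1 h with rfl | ⟨hl, hr⟩
      · exact (reach_cons Γ).2 (Or.inl rfl)
      · exact (reach_cons Γ).2 (Or.inr ⟨hl, ih hr⟩)

theorem delF_comm {c c' : V × Bool} (hne : c ≠ c') :
    ∀ (w : List (V × Bool)), delF c (delF c' w) = delF c' (delF c w) := by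
  intro w
  induction w with
  | nil => rfl
  | cons l t ih =>
    by_cases h1 : l = c' <;> by_cases h2 : l = c
    · exact absurd (h2.symm.trans h1) hne
    · have e1 : delF c' (l :: t) = t := by rw [delF_cons, if_pos h1]
      have e2 : delF c (l :: t) = l :: delF c t := by rw [delF_cons, if_neg h2]
      rw [e1, e2, delF_cons, if_pos h1]
    · have e1 : delF c' (l :: t) = l :: delF c' t := by rw [delF_cons, if_neg h1]
      have e2 : delF c (l :: t) = t := by rw [delF_cons, if_pos h2]
      rw [e1, e2, delF_cons, if_pos h2]
    · have e1 : delF c' (l :: t) = l :: delF c' t := by rw [delF_cons, if_neg h1]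
      have e2 : delF c (l :: t) = l :: delF c t := by rw [delF_cons, if_neg h2]
      rw [e1, e2, delF_cons, if_neg h2, delF_cons, if_neg h1, ih]

theorem irrQ_act {v : V} {ε : Bool} {q : QL Γ} (h : IrrQ Γ q) : IrrQ Γ (actQ Γ v ε q) := by
  induction q using Quot.ind
  rename_i w
  have hIw : Irr Γ w := h
  by_cases hR : Reach Γ v (!ε) w
  · obtain ⟨m, y, h1, h2, _, h4⟩ := reach_first Γ hR
    rw [show Quot.mk (WStep Γ) w = mkQ Γ w from rfl, actQ_del Γ hR, h4, irrQ_mk]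
    rw [h1] at hIw
    exact irr_del Γ hIw h2
  · rw [show Quot.mk (WStep Γ) w = mkQ Γ w from rfl, actQ_ins Γ hR]
    exact irr_ins Γ hIw hR

theorem actQ_inv {v : V} {ε : Bool} {w : List (V × Bool)} (hI : Irr Γ w) :
    actQ Γ v ε (actQ Γ v (!ε) (mkQ Γ w)) = mkQ Γ w := by
  by_cases hR : Reach Γ v ε w
  · have hR' : Reach Γ v (!(!ε)) w := by simpa using hR
    rw [actQ_del Γ hR']
    obtain ⟨m, y, h1, h2, h3, h4⟩ := reach_first_irr Γ hR hI
    have h4' : delF (v, !(!ε)) w = m ++ y := by simpa using h4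
    rw [h4']
    have hnr : ¬ Reach Γ v (!ε) (m ++ y) := by
      rintro ⟨m₂, y₂, he, hc₂⟩
      rcases List.append_eq_append_iff.1 he with ⟨t, ht1, ht2⟩ | ⟨t, ht1, ht2⟩
      · -- m₂ = m ++ t, y = t ++ (v,!ε) :: y₂
        apply hI
        refine ⟨m, t ++ (v, !ε) :: y₂, v, ε, by rw [h1, ht2], ?_⟩
        exact ⟨t, y₂, rfl, fun l hl => hc₂ l (by rw [ht1]; simp [hl])⟩
      · -- m = m₂ ++ t
        cases t with
        | nil =>
          simp only [nil_append] at ht2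
          apply hI
          refine ⟨m, (v, !ε) :: y₂, v, ε, by rw [h1, ← ht2], ?_⟩
          exact (reach_cons Γ).2 (Or.inl rfl)
        | cons e t' =>
          simp only [cons_append, cons.injEq] at ht2
          exact h3 (!ε) (by rw [ht1, ← ht2.1]; simp)
    rw [actQ_ins Γ hnr, ← bubble Γ h2, ← h1]
  · have hR' : ¬ Reach Γ v (!(!ε)) w := by simpa using hR
    rw [actQ_ins Γ hR']
    have hr2 : Reach Γ v (!ε) ((v, !ε) :: w) := (reach_cons Γ).2 (Or.inl rfl)
    rw [actQ_del Γ hr2, delF_cons, if_pos rfl]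

theorem actQ_comm_mixed {u v : V} {a b : Bool} {w : List (V × Bool)} (hadj : ¬ Γ.Adj u v)
    (hne : u ≠ v) (hRv : Reach Γ v (!b) w) (hRu : ¬ Reach Γ u (!a) w) :
    actQ Γ u a (actQ Γ v b (mkQ Γ w)) = actQ Γ v b (actQ Γ u a (mkQ Γ w)) := by
  rw [actQ_del Γ hRv]
  have hRu' : ¬ Reach Γ u (!a) (delF (v, !b) w) := fun h =>
    hRu (reach_of_delF Γ (show ¬ Γ.Adj u ((v, !b) : V × Bool).1 from hadj) h)
  rw [actQ_ins Γ hRu']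
  rw [actQ_ins Γ hRu]
  have hrv2 : Reach Γ v (!b) ((u, a) :: w) :=
    (reach_cons Γ).2 (Or.inr ⟨fun h => hadj h.symm, hRv⟩)
  rw [actQ_del Γ hrv2, delF_cons, if_neg (fun h => hne (congrArg Prod.fst h))]

theorem actQ_comm {u v : V} {a b : Bool} (hadj : ¬ Γ.Adj u v) (hne : u ≠ v)
    (w : List (V × Bool)) :
    actQ Γ u a (actQ Γ v b (mkQ Γ w)) = actQ Γ v b (actQ Γ u a (mkQ Γ w)) := by
  have hne1 : ((v, !b) : V × Bool) ≠ (u, !a) := fun h => hne (congrArg Prod.fst h).symm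
  have hne2 : ((u, !a) : V × Bool) ≠ (v, !b) := fun h => hne (congrArg Prod.fst h)
  by_cases hRv : Reach Γ v (!b) w <;> by_cases hRu : Reach Γ u (!a) w
  · -- both delete
    rw [actQ_del Γ hRv, actQ_del Γ hRu,
      actQ_del Γ (reach_delF_of_ne Γ hne1 hRu),
      actQ_del Γ (reach_delF_of_ne Γ hne2 hRv),
      delF_comm (hne2) _]
  · exact actQ_comm_mixed Γ hadj hne hRv hRu
  · exact (actQ_comm_mixed Γ (fun h => hadj h.symm) hne.symm hRu hRv).symm
  · -- both insert
    rw [actQ_ins Γ hRv, actQ_ins Γ hRu]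
    have h1 : ¬ Reach Γ u (!a) ((v, b) :: w) := by
      intro h
      rcases (reach_cons Γ).1 h with he | ⟨-, hr⟩
      · exact hne (congrArg Prod.fst he).symm
      · exact hRu hr
    have h2 : ¬ Reach Γ v (!b) ((u, a) :: w) := by
      intro h
      rcases (reach_cons Γ).1 h with he | ⟨-, hr⟩
      · exact hne (congrArg Prod.fst he)
      · exact hRv hr
    rw [actQ_ins Γ h1, actQ_ins Γ h2]
    exact Quot.sound ⟨[], w, (u, a), (v, b), hadj, rfl, rfl⟩

/-- The set of irreducible shuffle classes. -/
def XT := {q : QL Γ // IrrQ Γ q}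

noncomputable def actX (v : V) (ε : Bool) (x : XT Γ) : XT Γ :=
  ⟨actQ Γ v ε x.1, irrQ_act Γ x.2⟩

theorem actX_inv (v : V) (ε : Bool) (x : XT Γ) : actX Γ v ε (actX Γ v (!ε) x) = x := by
  obtain ⟨q, hq⟩ := x
  apply Subtype.ext
  show actQ Γ v ε (actQ Γ v (!ε) q) = q
  induction q using Quot.ind
  exact actQ_inv Γ hq

theorem actX_comm {u v : V} (hadj : ¬ Γ.Adj u v) (hne : u ≠ v) (a b : Bool) (x : XT Γ) :
    actX Γ u a (actX Γ v b x) = actX Γ v b (actX Γ u a x) := by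
  obtain ⟨q, hq⟩ := x
  apply Subtype.ext
  show actQ Γ u a (actQ Γ v b q) = actQ Γ v b (actQ Γ u a q)
  induction q using Quot.ind
  exact actQ_comm Γ hadj hne _

noncomputable def fPerm (v : V) : Equiv.Perm (XT Γ) where
  toFun := actX Γ v true
  invFun := actX Γ v false
  left_inv x := by simpa using actX_inv Γ v false x
  right_inv x := by simpa using actX_inv Γ v true x

theorem relsHold : ∀ r ∈ raagRels Γ, FreeGroup.lift (fun v => fPerm Γ v) r = 1 := by
  rintro r ⟨u, v, hne, hadj, rfl⟩
  have hc : fPerm Γ u * fPerm Γ v = fPerm Γ v * fPerm Γ u := by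
    ext x
    simp only [Equiv.Perm.mul_apply]
    exact actX_comm Γ hadj hne true true x
  simp only [map_mul, map_inv, FreeGroup.lift_apply_of]
  rw [hc]
  group

noncomputable def rho : Raag Γ →* Equiv.Perm (XT Γ) :=
  PresentedGroup.toGroup (relsHold Γ)

noncomputable def x0 : XT Γ := ⟨mkQ Γ [], irr_nil Γ⟩

noncomputable def FdOn (x : XT Γ) (w : List (V × Bool)) : XT Γ :=
  List.foldr (fun l y => actX Γ l.1 l.2 y) x w

noncomputable def Fd (w : List (V × Bool)) : XT Γ := FdOn Γ (x0 Γ) w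

theorem rho_lelem (l : V × Bool) (x : XT Γ) : rho Γ (lelem Γ l) x = actX Γ l.1 l.2 x := by
  rcases l with ⟨v, b⟩
  cases b
  · show rho Γ (lelem Γ (v, false)) x = actX Γ v false x
    have : lelem Γ (v, false) = (Raag.of Γ v)⁻¹ := by simp [lelem]
    rw [this, map_inv]
    have hof : rho Γ (Raag.of Γ v) = fPerm Γ v := PresentedGroup.toGroup.of (relsHold Γ)
    rw [hof]
    rfl
  · show rho Γ (lelem Γ (v, true)) x = actX Γ v true x
    have : lelem Γ (v, true) = Raag.of Γ v := by simp [lelem]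
    rw [this]
    have hof : rho Γ (Raag.of Γ v) = fPerm Γ v := PresentedGroup.toGroup.of (relsHold Γ)
    rw [hof]
    rfl

theorem feed (w : List (V × Bool)) (x : XT Γ) : rho Γ (wordProd Γ w) x = FdOn Γ x w := by
  induction w with
  | nil => simp [wp_nil, FdOn]
  | cons l t ih =>
    rw [wp_cons, map_mul, Equiv.Perm.mul_apply, ih]
    exact rho_lelem Γ l (FdOn Γ x t)

noncomputable def eX (x : XT Γ) : Raag Γ := wpQ Γ x.1

theorem eX_act (v : V) (ε : Bool) (x : XT Γ) :
    eX Γ (actX Γ v ε x) = lelem Γ (v, ε) * eX Γ x := by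
  obtain ⟨q, hq⟩ := x
  show wpQ Γ (actQ Γ v ε q) = lelem Γ (v, ε) * wpQ Γ q
  induction q using Quot.ind
  rename_i w
  by_cases hR : Reach Γ v (!ε) w
  · obtain ⟨m, y, h1, h2, _, h4⟩ := reach_first Γ hR
    rw [show Quot.mk (WStep Γ) w = mkQ Γ w from rfl, actQ_del Γ hR, h4, wpQ_mk, wpQ_mk, h1,
      wp_append, wp_append, wp_cons, lelem_not, ← mul_assoc,
      (commV_wordProd Γ (ε := ε) h2).eq, mul_assoc, mul_inv_cancel_left]
  · rw [show Quot.mk (WStep Γ) w = mkQ Γ w from rfl, actQ_ins Γ hR, wpQ_mk, wpQ_mk, wp_cons]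

theorem eX_rho (g : Raag Γ) (x : XT Γ) : eX Γ (rho Γ g x) = g * eX Γ x := by
  let S : Subgroup (Raag Γ) :=
    { carrier := {g | ∀ x, eX Γ (rho Γ g x) = g * eX Γ x}
      one_mem' := by intro x; simp
      mul_mem' := by
        intro a b ha hb x
        rw [map_mul, Equiv.Perm.mul_apply, ha, hb, mul_assoc]
      inv_mem' := by
        intro a ha x
        have h2 : rho Γ a (rho Γ a⁻¹ x) = x := by
          rw [← Equiv.Perm.mul_apply, ← map_mul, mul_inv_cancel, map_one, Equiv.Perm.one_apply]
        have h1 : eX Γ x = a * eX Γ (rho Γ a⁻¹ x) := by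
          conv_lhs => rw [← h2]
          exact ha _
        rw [eq_inv_mul_iff_mul_eq]
        exact h1.symm }
  have hgen : ∀ vtx : V, Raag.of Γ vtx ∈ S := by
    intro vtx x
    have h1 : rho Γ (Raag.of Γ vtx) x = actX Γ vtx true x := by
      have hof : rho Γ (Raag.of Γ vtx) = fPerm Γ vtx := PresentedGroup.toGroup.of (relsHold Γ)
      rw [hof]; rfl
    rw [h1, eX_act]
    have : lelem Γ (vtx, true) = Raag.of Γ vtx := by simp [lelem]
    rw [this]
  exact PresentedGroup.generated_by (raagRels Γ) S hgen g x

end RaagCancel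

namespace RaagCancel

open List

open scoped Classical

variable {V : Type} (Γ : SimpleGraph V)

def ReachQ (v : V) (β : Bool) : QL Γ → Prop :=
  Quot.lift (Reach Γ v β) fun _ _ hs => propext (reach_iff_step Γ hs)

@[simp] theorem reachQ_mk {v : V} {β : Bool} {w : List (V × Bool)} :
    ReachQ Γ v β (mkQ Γ w) ↔ Reach Γ v β w := Iff.rfl

/-- A canonical representative of an irreducible class. -/
noncomputable def rep (x : XT Γ) : List (V × Bool) := Quot.out x.1

theorem mk_rep (x : XT Γ) : mkQ Γ (rep Γ x) = x.1 := Quot.out_eq x.1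

theorem irr_rep (x : XT Γ) : Irr Γ (rep Γ x) := by
  have h := x.2
  rw [← mk_rep Γ x] at h
  exact h

theorem act_cases (v : V) (ε : Bool) (x : XT Γ) :
    (¬ ReachQ Γ v (!ε) x.1 ∧ ∀ w, x.1 = mkQ Γ w →
        (actX Γ v ε x).1 = mkQ Γ ((v, ε) :: w)) ∨
    (ReachQ Γ v (!ε) x.1 ∧ ∃ m y, x.1 = mkQ Γ (m ++ (v, !ε) :: y) ∧ CommV Γ v m ∧
        (∀ b', (v, b') ∉ m) ∧ (actX Γ v ε x).1 = mkQ Γ (m ++ y)) := by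
  by_cases hR : Reach Γ v (!ε) (rep Γ x)
  · right
    obtain ⟨m, y, h1, h2, h3, h4⟩ := reach_first_irr Γ hR (irr_rep Γ x)
    refine ⟨by rw [← mk_rep Γ x]; exact (reachQ_mk Γ).2 hR, m, y, by rw [← mk_rep Γ x, h1], h2, h3, ?_⟩
    show actQ Γ v ε x.1 = _
    rw [← mk_rep Γ x, actQ_del Γ hR, h4]
  · left
    refine ⟨by rw [← mk_rep Γ x]; exact fun h => hR ((reachQ_mk Γ).1 h), ?_⟩
    intro w hw
    have hRw : ¬ Reach Γ v (!ε) w := by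
      intro h
      apply hR
      have : ReachQ Γ v (!ε) x.1 := by rw [hw]; exact (reachQ_mk Γ).2 h
      rw [← mk_rep Γ x] at this
      exact (reachQ_mk Γ).1 this
    show actQ Γ v ε x.1 = _
    rw [hw, actQ_ins Γ hRw]

/-- Count of letters at a given vertex. -/
noncomputable def cntV (v : V) (w : List (V × Bool)) : ℕ :=
  w.countP (fun l => decide (l.1 = v))

theorem cntQ_eq_cntV (v : V) (w : List (V × Bool)) : cntQ Γ v (mkQ Γ w) = cntV v w := rfl

theorem len_act_le (v : V) (ε : Bool) (x : XT Γ) :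
    lenQ Γ (actX Γ v ε x).1 ≤ lenQ Γ x.1 + 1 := by
  rcases act_cases Γ v ε x with ⟨-, hins⟩ | ⟨-, m, y, hx, -, -, hres⟩
  · rw [hins (rep Γ x) (mk_rep Γ x).symm, ← mk_rep Γ x]
    simp
  · rw [hres, hx]
    simp only [lenQ_mk, length_append, length_cons]
    omega

theorem len_feed_le (x : XT Γ) : ∀ w, lenQ Γ (FdOn Γ x w).1 ≤ lenQ Γ x.1 + w.length := by
  intro w
  induction w with
  | nil => simp [FdOn]
  | cons l t ih =>
    have h1 : lenQ Γ (FdOn Γ x (l :: t)).1 ≤ lenQ Γ (FdOn Γ x t).1 + 1 :=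
      len_act_le Γ l.1 l.2 (FdOn Γ x t)
    simp only [length_cons]
    omega

theorem len_Fd_le (w : List (V × Bool)) : lenQ Γ (Fd Γ w).1 ≤ w.length := by
  have := len_feed_le Γ (x0 Γ) w
  simpa [x0, Fd] using this

theorem feed_len_eq : ∀ w, lenQ Γ (Fd Γ w).1 = w.length →
    (Fd Γ w).1 = mkQ Γ w ∧ (∀ x₁ l x₂, w = x₁ ++ l :: x₂ →
      (lenQ Γ (Fd Γ x₂).1 = x₂.length ∧ ¬ ReachQ Γ l.1 (!l.2) (Fd Γ x₂).1)) := by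
  intro w
  induction w with
  | nil =>
    intro _
    refine ⟨rfl, ?_⟩
    rintro x₁ l x₂ he
    exact absurd he.symm (by simp)
  | cons l t ih =>
    intro h
    have hle : lenQ Γ (Fd Γ t).1 ≤ t.length := len_Fd_le Γ t
    rcases act_cases Γ l.1 l.2 (Fd Γ t) with ⟨hnr, hins⟩ | ⟨-, m, y, hx, -, -, hres⟩
    · have hres := hins (rep Γ (Fd Γ t)) (mk_rep Γ (Fd Γ t)).symm
      have hlt : lenQ Γ (Fd Γ t).1 = t.length := by
        have h2 : lenQ Γ (Fd Γ (l :: t)).1 = lenQ Γ (Fd Γ t).1 + 1 := by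
          show lenQ Γ (actX Γ l.1 l.2 (Fd Γ t)).1 = _
          rw [hres, ← mk_rep Γ (Fd Γ t)]
          simp
        simp only [length_cons] at h
        omega
      obtain ⟨hval, hsplit⟩ := ih hlt
      constructor
      · show (actX Γ l.1 l.2 (Fd Γ t)).1 = _
        rw [hins t hval]
      · rintro x₁ l' x₂ he
        cases x₁ with
        | nil =>
          simp only [nil_append, cons.injEq] at he
          obtain ⟨rfl, rfl⟩ := he
          exact ⟨hlt, hnr⟩
        | cons e x₁' =>
          simp only [cons_append, cons.injEq] at he
          exact hsplit x₁' l' x₂ he.2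
    · exfalso
      have h2 : lenQ Γ (Fd Γ (l :: t)).1 + 1 = lenQ Γ (Fd Γ t).1 := by
        show lenQ Γ (actX Γ l.1 l.2 (Fd Γ t)).1 + 1 = _
        rw [hres, hx]
        simp only [lenQ_mk, length_append, length_cons]
        omega
      simp only [length_cons] at h
      omega

theorem exists_del_split : ∀ w, lenQ Γ (Fd Γ w).1 < w.length →
    ∃ x₁ l x₂, w = x₁ ++ l :: x₂ ∧ lenQ Γ (Fd Γ x₂).1 = x₂.length ∧
      ReachQ Γ l.1 (!l.2) (Fd Γ x₂).1 := by
  intro w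
  induction w with
  | nil => intro h; simp [Fd, FdOn, x0] at h
  | cons l t ih =>
    intro h
    by_cases ht : lenQ Γ (Fd Γ t).1 = t.length
    · rcases act_cases Γ l.1 l.2 (Fd Γ t) with ⟨hnr, hins⟩ | ⟨hr, -⟩
      · exfalso
        have h2 : lenQ Γ (Fd Γ (l :: t)).1 = lenQ Γ (Fd Γ t).1 + 1 := by
          show lenQ Γ (actX Γ l.1 l.2 (Fd Γ t)).1 = _
          rw [hins (rep Γ (Fd Γ t)) (mk_rep Γ (Fd Γ t)).symm, ← mk_rep Γ (Fd Γ t)]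
          simp
        simp only [length_cons] at h
        omega
      · exact ⟨[], l, t, rfl, ht, hr⟩
    · have hlt : lenQ Γ (Fd Γ t).1 < t.length := lt_of_le_of_ne (len_Fd_le Γ t) ht
      obtain ⟨x₁, l', x₂, h1, h2, h3⟩ := ih hlt
      exact ⟨l :: x₁, l', x₂, by rw [h1]; rfl, h2, h3⟩

theorem cnt_feed_le (u : V) : ∀ w, cntQ Γ u (Fd Γ w).1 ≤ cntV u w := by
  intro w
  induction w with
  | nil => simp [Fd, FdOn, x0, cntV, mkQ, cntQ]; rfl
  | cons l t ih =>
    have hcnt : cntV u (l :: t) = cntV u t + (if l.1 = u then 1 else 0) := by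
      simp [cntV, countP_cons]
    rcases act_cases Γ l.1 l.2 (Fd Γ t) with ⟨-, hins⟩ | ⟨-, m, y, hx, -, -, hres⟩
    · have hres := hins (rep Γ (Fd Γ t)) (mk_rep Γ (Fd Γ t)).symm
      have : cntQ Γ u (Fd Γ (l :: t)).1
          = cntQ Γ u (Fd Γ t).1 + (if l.1 = u then 1 else 0) := by
        show cntQ Γ u (actX Γ l.1 l.2 (Fd Γ t)).1 = _
        rw [hres, ← mk_rep Γ (Fd Γ t), cntQ_eq_cntV, cntQ_eq_cntV]
        simp [cntV, countP_cons]
      omega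
    · have h1 : cntQ Γ u (Fd Γ (l :: t)).1 ≤ cntQ Γ u (Fd Γ t).1 := by
        show cntQ Γ u (actX Γ l.1 l.2 (Fd Γ t)).1 ≤ _
        rw [hres, hx, cntQ_eq_cntV, cntQ_eq_cntV]
        simp [cntV, countP_append, countP_cons]
      omega

theorem cnt_no_del (v : V) : ∀ w,
    (∀ u₁ δ u₂, w = u₁ ++ (v, δ) :: u₂ → ¬ ReachQ Γ v (!δ) (Fd Γ u₂).1) →
    cntQ Γ v (Fd Γ w).1 = cntV v w := by
  intro w
  induction w with
  | nil => intro _; simp [Fd, FdOn, x0, cntV, mkQ, cntQ]; rfl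
  | cons l t ih =>
    intro hno
    have hnt : ∀ u₁ δ u₂, t = u₁ ++ (v, δ) :: u₂ → ¬ ReachQ Γ v (!δ) (Fd Γ u₂).1 :=
      fun u₁ δ u₂ he => hno (l :: u₁) δ u₂ (by rw [he]; rfl)
    have iht := ih hnt
    have hcnt : cntV v (l :: t) = cntV v t + (if l.1 = v then 1 else 0) := by
      simp [cntV, countP_cons]
    rcases act_cases Γ l.1 l.2 (Fd Γ t) with ⟨-, hins⟩ | ⟨hr, m, y, hx, -, -, hres⟩
    · have hres := hins (rep Γ (Fd Γ t)) (mk_rep Γ (Fd Γ t)).symm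
      have : cntQ Γ v (Fd Γ (l :: t)).1
          = cntQ Γ v (Fd Γ t).1 + (if l.1 = v then 1 else 0) := by
        show cntQ Γ v (actX Γ l.1 l.2 (Fd Γ t)).1 = _
        rw [hres, ← mk_rep Γ (Fd Γ t), cntQ_eq_cntV, cntQ_eq_cntV]
        simp [cntV, countP_cons]
      omega
    · by_cases hlv : l.1 = v
      · exfalso
        apply hno [] l.2 t (by rw [← hlv]; rfl)
        rw [← hlv]
        exact hr
      · have h1 : cntQ Γ v (Fd Γ (l :: t)).1 = cntQ Γ v (Fd Γ t).1 := by
          show cntQ Γ v (actX Γ l.1 l.2 (Fd Γ t)).1 = _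
          rw [hres, hx, cntQ_eq_cntV, cntQ_eq_cntV]
          simp [cntV, countP_append, countP_cons, hlv]
        rw [if_neg hlv] at hcnt
        omega

theorem wp_Fd (w : List (V × Bool)) : wpQ Γ (Fd Γ w).1 = wordProd Γ w := by
  have h1 : eX Γ (Fd Γ w) = wordProd Γ w * eX Γ (x0 Γ) := by
    show eX Γ (FdOn Γ (x0 Γ) w) = _
    rw [← feed Γ w (x0 Γ)]
    exact eX_rho Γ (wordProd Γ w) (x0 Γ)
  have h2 : eX Γ (x0 Γ) = 1 := rfl
  rw [h2, mul_one] at h1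
  exact h1

theorem Fd_eq_of_wp {w z : List (V × Bool)} (h : wordProd Γ w = wordProd Γ z) :
    Fd Γ w = Fd Γ z := by
  have h1 := feed Γ w (x0 Γ)
  have h2 := feed Γ z (x0 Γ)
  show FdOn Γ (x0 Γ) w = FdOn Γ (x0 Γ) z
  rw [← h1, ← h2, h]

theorem wp_rep_Fd (w : List (V × Bool)) :
    wordProd Γ (rep Γ (Fd Γ w)) = wordProd Γ w := by
  have h := wp_Fd Γ w
  rw [← mk_rep Γ (Fd Γ w), wpQ_mk] at h
  exact h

theorem rep_Fd_reduced (w : List (V × Bool)) : IsReducedWord Γ (rep Γ (Fd Γ w)) := by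
  intro z hz
  have hlen : (rep Γ (Fd Γ w)).length = lenQ Γ (Fd Γ w).1 := by
    rw [← mk_rep Γ (Fd Γ w)]; rfl
  have hz' : wordProd Γ z = wordProd Γ w := by rw [hz, wp_rep_Fd]
  rw [hlen, Fd_eq_of_wp Γ hz'.symm]
  exact len_Fd_le Γ z

theorem reduced_feed {r : List (V × Bool)} (h : IsReducedWord Γ r) :
    (Fd Γ r).1 = mkQ Γ r := by
  have hge : r.length ≤ lenQ Γ (Fd Γ r).1 := by
    have := h (rep Γ (Fd Γ r)) (wp_rep_Fd Γ r)
    rw [← mk_rep Γ (Fd Γ r)]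
    exact this
  exact (feed_len_eq Γ r (le_antisymm (len_Fd_le Γ r) hge)).1

theorem supp_sub (z : List (V × Bool)) (u : V)
    (hu : u ∈ raagSupp Γ (wordProd Γ z)) : ∃ l ∈ z, l.1 = u := by
  obtain ⟨r, hred, hwp, b, hmem⟩ := hu
  have h1 : (Fd Γ r).1 = mkQ Γ r := reduced_feed Γ hred
  have h2 : Fd Γ r = Fd Γ z := Fd_eq_of_wp Γ hwp
  have h3 : 0 < cntV u r := by
    apply List.countP_pos_iff.2
    exact ⟨(u, b), hmem, by simp⟩
  have h4 : 0 < cntQ Γ u (Fd Γ z).1 := by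
    rw [← h2, h1, cntQ_eq_cntV]
    exact h3
  have h6 : 0 < cntV u z := lt_of_lt_of_le h4 (cnt_feed_le Γ u z)
  obtain ⟨l, hl, hp⟩ := List.countP_pos_iff.1 h6
  exact ⟨l, hl, by simpa using hp⟩

end RaagCancel

namespace RaagCancel

open List

open scoped Classical

variable {V : Type} (Γ : SimpleGraph V)

theorem Jlem (v : V) (γ : Bool) :
    ∀ (w' : List (V × Bool)), (∀ b', (v, b') ∉ w') → ∀ (x : XT Γ) (bw : List (V × Bool)),
      x.1 = mkQ Γ ((v, γ) :: bw) →
      ∃ a b d, (FdOn Γ x w').1 = mkQ Γ (a ++ (v, γ) :: b) ∧ (∀ b', (v, b') ∉ a) ∧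
        CommV Γ v d ∧ wordProd Γ w' = wordProd Γ a * wordProd Γ d := by
  intro w'
  induction w' with
  | nil =>
    intro _ x bw hx
    exact ⟨[], bw, [], by simpa [FdOn] using hx, by simp, by simp [CommV], by simp [wp_nil]⟩
  | cons l t ih =>
    intro hnv x bw hx
    have hnt : ∀ b', (v, b') ∉ t := fun b' h => hnv b' (mem_cons_of_mem _ h)
    obtain ⟨a, b, d, hval, hna, hcd, hwp⟩ := ih hnt x bw hx
    have hlv : l.1 ≠ v := by
      intro he
      exact hnv l.2 (by rw [← he]; exact mem_cons_self)
    have hstep : FdOn Γ x (l :: t) = actX Γ l.1 l.2 (FdOn Γ x t) := rfl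
    by_cases hR : Reach Γ l.1 (!l.2) (a ++ (v, γ) :: b)
    · -- deletion, computed on our chosen representative
      have hres : (FdOn Γ x (l :: t)).1 = mkQ Γ (delF (l.1, !l.2) (a ++ (v, γ) :: b)) := by
        rw [hstep]
        show actQ Γ l.1 l.2 (FdOn Γ x t).1 = _
        rw [hval, actQ_del Γ hR]
      obtain ⟨m, y₂, hdec, hcm, hnm, hdel⟩ := reach_first Γ hR
      rcases one_decomp hdec.symm with ⟨t₂, ht1, ht2⟩ | ⟨ht1, ht2, ht3⟩ | ⟨t₂, ht1, ht2⟩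
      · -- deleted letter inside `a` : a = m ++ (l.1,!l.2) :: t₂
        refine ⟨m ++ t₂, b, d, ?_, ?_, hcd, ?_⟩
        · rw [hres, hdel, ht2, ← append_assoc]
        · intro b' hb'
          apply hna b'
          rw [ht1]
          rcases mem_append.1 hb' with h' | h'
          · exact mem_append.2 (Or.inl h')
          · exact mem_append.2 (Or.inr (mem_cons_of_mem _ h'))
        · have hc1 : Commute (lelem Γ (l.1, l.2)) (wordProd Γ m) :=
            commV_wordProd Γ hcm
          have hinv : wordProd Γ a
              = wordProd Γ m * ((lelem Γ (l.1, l.2))⁻¹ * wordProd Γ t₂) := by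
            rw [ht1, wp_append, wp_cons, lelem_not]
          rw [wp_cons, hwp, hinv, wp_append]
          have he2 : lelem Γ l = lelem Γ (l.1, l.2) := rfl
          rw [he2]
          simp only [← mul_assoc]
          rw [hc1.eq]
          group
      · -- deleted letter is the marked letter : impossible since l.1 ≠ v
        exact absurd (congrArg Prod.fst ht2) hlv
      · -- deleted letter inside `b` : m = a ++ (v,γ) :: t₂, b = t₂ ++ (l.1,!l.2) :: y₂
        have hca : CommV Γ l.1 a := fun l' hl' => hcm l' (by rw [ht1]; simp [hl'])
        have hadjlv : ¬ Γ.Adj l.1 v := hcm (v, γ) (by rw [ht1]; simp)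
        refine ⟨a, t₂ ++ y₂, (l.1, l.2) :: d, ?_, hna, ?_, ?_⟩
        · rw [hres, hdel, ht1]
          simp [append_assoc]
        · intro l' hl'
          rcases mem_cons.1 hl' with rfl | h'
          · exact fun h => hadjlv h.symm
          · exact hcd l' h'
        · have hc1 : Commute (lelem Γ (l.1, l.2)) (wordProd Γ a) :=
            commV_wordProd Γ hca
          rw [wp_cons, hwp, wp_cons]
          have he2 : lelem Γ l = lelem Γ (l.1, l.2) := rfl
          rw [he2]
          simp only [← mul_assoc]
          rw [hc1.eq]
    · -- insertion
      have hres : (FdOn Γ x (l :: t)).1 = mkQ Γ (l :: (a ++ (v, γ) :: b)) := by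
        rw [hstep]
        show actQ Γ l.1 l.2 (FdOn Γ x t).1 = _
        rw [hval, actQ_ins Γ hR]
      refine ⟨l :: a, b, d, by rw [hres]; rfl, ?_, hcd, ?_⟩
      · intro b' hb'
        rcases mem_cons.1 hb' with he | h'
        · exact hlv (congrArg Prod.fst he.symm)
        · exact hna b' h'
      · rw [wp_cons, hwp, wp_cons, mul_assoc]

theorem first_v {v : V} : ∀ {w : List (V × Bool)}, (∃ b, (v, b) ∈ w) →
    ∃ s δ t, w = s ++ (v, δ) :: t ∧ ∀ b', (v, b') ∉ s := by
  intro w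
  induction w with
  | nil => rintro ⟨b, hb⟩; simp at hb
  | cons l t ih =>
    rintro ⟨b, hb⟩
    by_cases hl : l.1 = v
    · refine ⟨[], l.2, t, ?_, by simp⟩
      rw [show ((v, l.2) : V × Bool) = l from by rw [← hl]]
      rfl
    · have hbt : (v, b) ∈ t := by
        rcases mem_cons.1 hb with he | h'
        · exact absurd (congrArg Prod.fst he.symm) hl
        · exact h'
      obtain ⟨s, δ, t', h1, h2⟩ := ih ⟨b, hbt⟩
      refine ⟨l :: s, δ, t', by rw [h1]; rfl, ?_⟩
      intro b' hb'
      rcases mem_cons.1 hb' with he | h'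
      · exact hl (congrArg Prod.fst he.symm)
      · exact h2 b' h'

theorem first_eq {v : V} {s₁ s₂ t₁ t₂ : List (V × Bool)} {c₁ c₂ : V × Bool}
    (h : s₁ ++ c₁ :: t₁ = s₂ ++ c₂ :: t₂) (h₁ : ∀ b', (v, b') ∉ s₁)
    (h₂ : ∀ b', (v, b') ∉ s₂) (hc₁ : c₁.1 = v) (hc₂ : c₂.1 = v) :
    s₁ = s₂ ∧ c₁ = c₂ ∧ t₁ = t₂ := by
  rcases one_decomp h with ⟨t, ht1, ht2⟩ | ⟨ht1, ht2, ht3⟩ | ⟨t, ht1, ht2⟩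
  · exfalso
    apply h₂ c₁.2
    rw [ht1]
    have : ((v, c₁.2) : V × Bool) = c₁ := by rw [← hc₁]
    rw [this]
    simp
  · exact ⟨ht1, ht2, ht3⟩
  · exfalso
    apply h₁ c₂.2
    rw [ht1]
    have : ((v, c₂.2) : V × Bool) = c₂ := by rw [← hc₂]
    rw [this]
    simp

theorem core {v : V} {ε : Bool} {w₂ : List (V × Bool)}
    (hR : ReachQ Γ v (!ε) (Fd Γ w₂).1)
    (hno : ∀ u₁ δ u₂, w₂ = u₁ ++ (v, δ) :: u₂ → ¬ ReachQ Γ v (!δ) (Fd Γ u₂).1) :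
    ∃ s y, w₂ = s ++ (v, !ε) :: y ∧ (∀ b', (v, b') ∉ s) ∧
      ∀ u ∈ raagSupp Γ (wordProd Γ s), ¬ Γ.Adj v u := by
  have hre : Reach Γ v (!ε) (rep Γ (Fd Γ w₂)) := by
    rw [← mk_rep Γ (Fd Γ w₂)] at hR
    exact (reachQ_mk Γ).1 hR
  have hcnt : 0 < cntQ Γ v (Fd Γ w₂).1 := by
    obtain ⟨m, y, h1, -⟩ := hre
    rw [← mk_rep Γ (Fd Γ w₂), cntQ_eq_cntV, h1]
    simp [cntV, countP_append, countP_cons]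
  have hcv : 0 < cntV v w₂ := lt_of_lt_of_le hcnt (cnt_feed_le Γ v w₂)
  have hex : ∃ b, (v, b) ∈ w₂ := by
    obtain ⟨l, hl, hp⟩ := List.countP_pos_iff.1 hcv
    have : l.1 = v := by simpa using hp
    exact ⟨l.2, by rw [show ((v, l.2) : V × Bool) = l from by rw [← this]]; exact hl⟩
  obtain ⟨s, δp, w₃, hsplit, hnos⟩ := first_v hex
  have hnr3 : ¬ ReachQ Γ v (!δp) (Fd Γ w₃).1 := hno s δp w₃ hsplit
  have hstep : (Fd Γ ((v, δp) :: w₃)).1 = mkQ Γ ((v, δp) :: rep Γ (Fd Γ w₃)) := by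
    show actQ Γ v δp (Fd Γ w₃).1 = _
    rw [← mk_rep Γ (Fd Γ w₃)]
    apply actQ_ins
    intro h
    apply hnr3
    rw [← mk_rep Γ (Fd Γ w₃)]
    exact (reachQ_mk Γ).2 h
  obtain ⟨a, b, d, hval, hna, hcd, hwp⟩ :=
    Jlem Γ v δp s hnos (Fd Γ ((v, δp) :: w₃)) (rep Γ (Fd Γ w₃)) hstep
  have hfd : Fd Γ w₂ = FdOn Γ (Fd Γ ((v, δp) :: w₃)) s := by
    rw [hsplit]
    show FdOn Γ (x0 Γ) (s ++ (v, δp) :: w₃) = _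
    simp [FdOn, Fd, List.foldr_append]
  have hRr : Reach Γ v (!ε) (a ++ (v, δp) :: b) := by
    rw [hfd, hval] at hR
    exact (reachQ_mk Γ).1 hR
  have hIrr : Irr Γ (a ++ (v, δp) :: b) := by
    have h2 := (FdOn Γ (Fd Γ ((v, δp) :: w₃)) s).2
    rw [hval] at h2
    exact h2
  obtain ⟨m, y', hdec, hcm, hnm, -⟩ := reach_first_irr Γ hRr hIrr
  obtain ⟨hs_eq, hc_eq, -⟩ := first_eq hdec hna hnm rfl rfl
  have hδ : δp = !ε := congrArg Prod.snd hc_eq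
  refine ⟨s, w₃, by rw [hsplit, hδ], hnos, ?_⟩
  intro u hu
  have hws : wordProd Γ s = wordProd Γ (a ++ d) := by rw [wp_append, hwp]
  rw [hws] at hu
  obtain ⟨l, hl, rfl⟩ := supp_sub Γ _ _ hu
  rcases mem_append.1 hl with h' | h'
  · exact hcm l (by rw [← hs_eq]; exact h')
  · exact hcd l h'

theorem rightmost {v : V} : ∀ (n : ℕ) (w : List (V × Bool)), w.length ≤ n →
    (∃ u₁ δ u₂, w = u₁ ++ (v, δ) :: u₂ ∧ ReachQ Γ v (!δ) (Fd Γ u₂).1) →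
    ∃ u₁ δ u₂, w = u₁ ++ (v, δ) :: u₂ ∧ ReachQ Γ v (!δ) (Fd Γ u₂).1 ∧
      ∀ s₁ γ s₂, u₂ = s₁ ++ (v, γ) :: s₂ → ¬ ReachQ Γ v (!γ) (Fd Γ s₂).1 := by
  intro n
  induction n with
  | zero =>
    rintro w hw ⟨u₁, δ, u₂, hsp, -⟩
    rw [hsp] at hw
    simp at hw
  | succ n ih =>
    rintro w hw ⟨u₁, δ, u₂, hsp, hr⟩
    by_cases hin : ∃ s₁ γ s₂, u₂ = s₁ ++ (v, γ) :: s₂ ∧ ReachQ Γ v (!γ) (Fd Γ s₂).1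
    · obtain ⟨s₁, γ, s₂, hsp2, hr2⟩ := hin
      have hlen : u₂.length ≤ n := by
        rw [hsp] at hw
        simp only [length_append, length_cons] at hw
        omega
      obtain ⟨a₁, δ', a₂, h1, h2, h3⟩ := ih u₂ hlen ⟨s₁, γ, s₂, hsp2, hr2⟩
      exact ⟨u₁ ++ (v, δ) :: a₁, δ', a₂, by rw [hsp, h1]; simp, h2, h3⟩
    · push_neg at hin
      exact ⟨u₁, δ, u₂, hsp, hr, fun s₁ γ s₂ h => hin s₁ γ s₂ h⟩

theorem part1 (w : List (V × Bool)) (v : V) (hb : ∃ b, (v, b) ∈ w)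
    (hv : v ∉ raagSupp Γ (wordProd Γ w)) : HasInnermostCancellationOf Γ w v := by
  have hc0 : cntQ Γ v (Fd Γ w).1 = 0 := by
    by_contra hpos
    have hpos' : 0 < cntQ Γ v (Fd Γ w).1 := Nat.pos_of_ne_zero hpos
    rw [← mk_rep Γ (Fd Γ w), cntQ_eq_cntV] at hpos'
    obtain ⟨l, hl, hp⟩ := List.countP_pos_iff.1 hpos'
    have hlv : l.1 = v := by simpa using hp
    apply hv
    exact ⟨rep Γ (Fd Γ w), rep_Fd_reduced Γ w, wp_rep_Fd Γ w, l.2,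
      by rw [show ((v, l.2) : V × Bool) = l from by rw [← hlv]]; exact hl⟩
  have hvw : 0 < cntV v w := by
    obtain ⟨b, hb⟩ := hb
    exact List.countP_pos_iff.2 ⟨(v, b), hb, by simp⟩
  have hdel : ∃ u₁ δ u₂, w = u₁ ++ (v, δ) :: u₂ ∧ ReachQ Γ v (!δ) (Fd Γ u₂).1 := by
    by_contra h
    push_neg at h
    have := cnt_no_del Γ v w (fun u₁ δ u₂ hs => h u₁ δ u₂ hs)
    omega
  obtain ⟨u₁, δ, u₂, hsp, hr, hno⟩ := rightmost Γ w.length w le_rfl hdel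
  obtain ⟨s, y, hsp2, hnos, hsupp⟩ := core Γ hr hno
  exact ⟨u₁, s, y, δ, by rw [hsp, hsp2], hsupp, hnos⟩

theorem part2 (w : List (V × Bool)) (hw : ¬ IsReducedWord Γ w) :
    ∃ v, HasInnermostCancellationOf Γ w v := by
  have hz : ∃ z : List (V × Bool), wordProd Γ z = wordProd Γ w ∧ z.length < w.length := by
    simp only [IsReducedWord, not_forall, not_le] at hw
    obtain ⟨z, h1, h2⟩ := hw
    exact ⟨z, h1, h2⟩
  obtain ⟨z, hz1, hz2⟩ := hz
  have h1 : lenQ Γ (Fd Γ w).1 < w.length := by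
    rw [Fd_eq_of_wp Γ hz1.symm]
    exact lt_of_le_of_lt (len_Fd_le Γ z) hz2
  obtain ⟨x₁, l, x₂, hsp, hlen2, hr⟩ := exists_del_split Γ w h1
  have hall := (feed_len_eq Γ x₂ hlen2).2
  have hno : ∀ u₁ δ u₂, x₂ = u₁ ++ (l.1, δ) :: u₂ → ¬ ReachQ Γ l.1 (!δ) (Fd Γ u₂).1 := by
    intro u₁ δ u₂ he
    exact (hall u₁ (l.1, δ) u₂ he).2
  obtain ⟨s, y, hsp2, hnos, hsupp⟩ := core Γ (v := l.1) (ε := l.2) hr hno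
  refine ⟨l.1, x₁, s, y, l.2, ?_, hsupp, hnos⟩
  rw [hsp, hsp2]

end RaagCancel

/-- If `v` or `v⁻¹` occurs as a letter of a word `w` but `v ∉ supp(g)` for the
element `g` represented by `w`, then `w` contains a cancellation of `v`, and hence an innermost
cancellation of `v`.  Consequently every non-reduced word contains an innermost cancellation of
some vertex. -/
theorem cancellation_of_dead_letter {V : Type} [Fintype V] (Γ : SimpleGraph V) :
    (∀ (w : List (V × Bool)) (v : V),
      (∃ b, (v, b) ∈ w) → v ∉ raagSupp Γ (wordProd Γ w) →
        HasCancellationOf Γ w v ∧ HasInnermostCancellationOf Γ w v) ∧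
    (∀ w : List (V × Bool), ¬ IsReducedWord Γ w →
      ∃ v : V, HasInnermostCancellationOf Γ w v) := by
  constructor
  · intro w v hb hv
    have h := RaagCancel.part1 Γ w v hb hv
    refine ⟨?_, h⟩
    obtain ⟨w₁, w', w₂, b, h1, h2, h3⟩ := h
    exact ⟨w₁, w', w₂, b, h1, h2⟩
  · intro w hw
    exact RaagCancel.part2 Γ w hw
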